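/- For each integer m ≥ 0, let A_m be the least index n ≥ 0 such that S_n(√2) = m. Then A_0 = 0, A_1 = 3, and A_{n+1} = 6A_n − A_{n-1} + 2 for all n ≥ 1. -/

import Mathlib

/-- The deterministic random walk `S_n(ξ) = ∑_{j=1}^n (-1)^⌊j·ξ⌋`. -/
noncomputable def S (ξ : ℝ) (n : ℕ) : ℤ :=
  ∑ j ∈ Finset.Icc 1 n, ((Int.negOnePow ⌊(j : ℝ) * ξ⌋ : ℤˣ) : ℤ)

/-- `A m` is the least index `n ≥ 0` such that `S_n(√2) = m`. -/
noncomputable def A (m : ℕ) : ℕ :=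
  sInf {n : ℕ | S (Real.sqrt 2) n = (m : ℤ)}

noncomputable def aa (n : ℕ) : ℤ := ⌊(n : ℝ) * Real.sqrt 2⌋
noncomputable def gg (n : ℕ) : ℕ := 3 * n + 2 * (aa n).toNat
noncomputable def ss (n : ℕ) : ℤ := (Int.negOnePow (aa n) : ℤ)

lemma r_sq : Real.sqrt 2 ^ 2 = 2 := Real.sq_sqrt (by norm_num)
lemma r_nonneg : (0:ℝ) ≤ Real.sqrt 2 := Real.sqrt_nonneg 2
lemma r_lb : (1.4 : ℝ) < Real.sqrt 2 := by nlinarith [r_sq, r_nonneg]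
lemma r_ub : Real.sqrt 2 < 1.5 := by nlinarith [r_sq, r_nonneg]
lemma aa_le (n : ℕ) : (aa n : ℝ) ≤ n * Real.sqrt 2 := Int.floor_le _
lemma lt_aa (n : ℕ) : (n : ℝ) * Real.sqrt 2 < aa n + 1 := Int.lt_floor_add_one _
lemma aa_nonneg (n : ℕ) : 0 ≤ aa n := Int.floor_nonneg.mpr (by positivity)
lemma aa_zero : aa 0 = 0 := by unfold aa; norm_num
lemma gg_cast (n : ℕ) : ((gg n : ℕ) : ℤ) = 3 * n + 2 * aa n := by
  unfold gg
  push_cast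
  rw [Int.toNat_of_nonneg (aa_nonneg n)]

lemma floor_key (n : ℕ) (c v : ℤ) (h1 : (v : ℝ) ≤ c * Real.sqrt 2)
    (h2 : c * Real.sqrt 2 + 3 - 2 * Real.sqrt 2 ≤ v + 1) :
    ⌊((3 * n + 2 * aa n + c : ℤ) : ℝ) * Real.sqrt 2⌋ = 4 * n + 3 * aa n + v := by
  set r := Real.sqrt 2
  have hr : r ^ 2 = 2 := r_sq
  have h3 : (aa n : ℝ) ≤ n * r := aa_le n
  have h4 : (n : ℝ) * r < aa n + 1 := lt_aa n
  have hrlb : (1.4:ℝ) < r := r_lb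
  have hrub : r < 1.5 := r_ub
  rw [Int.floor_eq_iff]
  constructor
  · push_cast
    nlinarith [mul_nonneg (by nlinarith : (0:ℝ) ≤ 3 - 2*r) (by linarith : (0:ℝ) ≤ (n:ℝ)*r - aa n)]
  · push_cast
    nlinarith [mul_lt_mul_of_pos_left (by linarith : (n:ℝ)*r - aa n < 1) (by nlinarith : (0:ℝ) < 3 - 2*r)]

lemma floor_key7 (n : ℕ) (hφ : 2 - Real.sqrt 2 ≤ (n:ℝ) * Real.sqrt 2 - aa n) :
    ⌊((3 * n + 2 * aa n + 7 : ℤ) : ℝ) * Real.sqrt 2⌋ = 4 * n + 3 * aa n + 10 := by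
  set r := Real.sqrt 2
  have hr : r ^ 2 = 2 := r_sq
  have h3 : (aa n : ℝ) ≤ n * r := aa_le n
  have h4 : (n : ℝ) * r < aa n + 1 := lt_aa n
  have hrlb : (1.4:ℝ) < r := r_lb
  have hrub : r < 1.5 := r_ub
  rw [Int.floor_eq_iff]
  constructor
  · push_cast
    nlinarith [mul_le_mul_of_nonneg_left hφ (by nlinarith : (0:ℝ) ≤ 3 - 2*r)]
  · push_cast
    nlinarith [mul_lt_mul_of_pos_left (by linarith : (n:ℝ)*r - aa n < 1) (by nlinarith : (0:ℝ) < 3 - 2*r)]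

lemma gap (n : ℕ) :
    (aa (n+1) = aa n + 1 ∧ (n:ℝ) * Real.sqrt 2 - aa n < 2 - Real.sqrt 2) ∨
    (aa (n+1) = aa n + 2 ∧ 2 - Real.sqrt 2 ≤ (n:ℝ) * Real.sqrt 2 - aa n) := by
  set r := Real.sqrt 2
  have hr : r ^ 2 = 2 := r_sq
  have h3 : (aa n : ℝ) ≤ n * r := aa_le n
  have h4 : (n : ℝ) * r < aa n + 1 := lt_aa n
  have hrlb : (1.4:ℝ) < r := r_lb
  have hrub : r < 1.5 := r_ub
  have hc : aa (n+1) = ⌊((n:ℝ)+1) * r⌋ := by unfold aa; push_cast; ring_nf; rfl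
  by_cases h : (n:ℝ) * r - aa n < 2 - r
  · left
    refine ⟨?_, h⟩
    rw [hc, Int.floor_eq_iff] <;> constructor <;> push_cast <;> nlinarith
  · right
    push_neg at h
    refine ⟨?_, h⟩
    rw [hc, Int.floor_eq_iff] <;> constructor <;> push_cast <;> nlinarith

lemma aa_gg (n c : ℕ) (v : ℤ) (h1 : (v : ℝ) ≤ (c:ℤ) * Real.sqrt 2)
    (h2 : (c:ℤ) * Real.sqrt 2 + 3 - 2 * Real.sqrt 2 ≤ v + 1) :
    aa (gg n + c) = 4 * n + 3 * aa n + v := by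
  have h0 : ((aa n).toNat : ℤ) = aa n := Int.toNat_of_nonneg (aa_nonneg n)
  have hcast : ((gg n + c : ℕ) : ℝ) = ((3 * (n:ℤ) + 2 * aa n + (c:ℤ) : ℤ) : ℝ) := by
    push_cast [gg]
    rw [show ((aa n).toNat : ℝ) = ((aa n : ℤ) : ℝ) from by exact_mod_cast h0]
  show ⌊((gg n + c : ℕ) : ℝ) * Real.sqrt 2⌋ = _
  rw [hcast]
  exact floor_key n c v h1 h2

lemma negOnePow_shift (n : ℕ) (v : ℤ) :
    Int.negOnePow (4 * n + 3 * aa n + v) = Int.negOnePow (aa n) * Int.negOnePow v := by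
  have h : 4 * (n:ℤ) + 3 * aa n + v = 2 * (2 * n + aa n) + (aa n + v) := by ring
  rw [h, Int.negOnePow_add, Int.negOnePow_two_mul, one_mul, Int.negOnePow_add]

lemma S_succ (n : ℕ) :
    S (Real.sqrt 2) (n + 1) = S (Real.sqrt 2) n + (Int.negOnePow (aa (n+1)) : ℤ) := by
  unfold S aa
  rw [Finset.sum_Icc_succ_top (Nat.succ_le_succ (Nat.zero_le n))]

lemma aa_gg1 (n : ℕ) : aa (gg n + 1) = 4 * n + 3 * aa n + 1 :=
  aa_gg n 1 1 (by push_cast; linarith [r_lb]) (by push_cast; linarith [r_lb, r_ub])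
lemma aa_gg2 (n : ℕ) : aa (gg n + 2) = 4 * n + 3 * aa n + 2 :=
  aa_gg n 2 2 (by push_cast; linarith [r_lb]) (by push_cast; linarith [r_lb, r_ub])
lemma aa_gg3 (n : ℕ) : aa (gg n + 3) = 4 * n + 3 * aa n + 4 :=
  aa_gg n 3 4 (by push_cast; linarith [r_lb]) (by push_cast; linarith [r_lb, r_ub])
lemma aa_gg4 (n : ℕ) : aa (gg n + 4) = 4 * n + 3 * aa n + 5 :=
  aa_gg n 4 5 (by push_cast; linarith [r_lb]) (by push_cast; linarith [r_lb, r_ub])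
lemma aa_gg5 (n : ℕ) : aa (gg n + 5) = 4 * n + 3 * aa n + 7 :=
  aa_gg n 5 7 (by push_cast; linarith [r_lb]) (by push_cast; linarith [r_lb, r_ub])
lemma aa_gg6 (n : ℕ) : aa (gg n + 6) = 4 * n + 3 * aa n + 8 :=
  aa_gg n 6 8 (by push_cast; linarith [r_lb]) (by push_cast; linarith [r_lb, r_ub])

lemma aa_gg7 (n : ℕ) (hφ : 2 - Real.sqrt 2 ≤ (n:ℝ) * Real.sqrt 2 - aa n) :
    aa (gg n + 7) = 4 * n + 3 * aa n + 10 := by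
  have h0 : ((aa n).toNat : ℤ) = aa n := Int.toNat_of_nonneg (aa_nonneg n)
  have hcast : ((gg n + 7 : ℕ) : ℝ) = ((3 * (n:ℤ) + 2 * aa n + 7 : ℤ) : ℝ) := by
    push_cast [gg]
    rw [show ((aa n).toNat : ℝ) = ((aa n : ℤ) : ℝ) from by exact_mod_cast h0]
  show ⌊((gg n + 7 : ℕ) : ℝ) * Real.sqrt 2⌋ = _
  rw [hcast]
  exact floor_key7 n hφ

lemma S_block (n : ℕ) :
    S (Real.sqrt 2) (gg n + 1) = S (Real.sqrt 2) (gg n) - ss n ∧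
    S (Real.sqrt 2) (gg n + 2) = S (Real.sqrt 2) (gg n) ∧
    S (Real.sqrt 2) (gg n + 3) = S (Real.sqrt 2) (gg n) + ss n ∧
    S (Real.sqrt 2) (gg n + 4) = S (Real.sqrt 2) (gg n) ∧
    S (Real.sqrt 2) (gg n + 5) = S (Real.sqrt 2) (gg n) - ss n ∧
    S (Real.sqrt 2) (gg n + 6) = S (Real.sqrt 2) (gg n) := by
  have t1 := S_succ (gg n)
  have t2 := S_succ (gg n + 1)
  have t3 := S_succ (gg n + 2)
  have t4 := S_succ (gg n + 3)
  have t5 := S_succ (gg n + 4)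
  have t6 := S_succ (gg n + 5)
  rw [show gg n + 1 + 1 = gg n + 2 from by omega] at t2
  rw [show gg n + 2 + 1 = gg n + 3 from by omega] at t3
  rw [show gg n + 3 + 1 = gg n + 4 from by omega] at t4
  rw [show gg n + 4 + 1 = gg n + 5 from by omega] at t5
  rw [show gg n + 5 + 1 = gg n + 6 from by omega] at t6
  rw [aa_gg1 n, negOnePow_shift] at t1
  rw [aa_gg2 n, negOnePow_shift] at t2
  rw [aa_gg3 n, negOnePow_shift] at t3
  rw [aa_gg4 n, negOnePow_shift] at t4
  rw [aa_gg5 n, negOnePow_shift] at t5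
  rw [aa_gg6 n, negOnePow_shift] at t6
  rw [show Int.negOnePow 1 = -1 from Int.negOnePow_one] at t1
  rw [show Int.negOnePow 2 = 1 from Int.negOnePow_even 2 (by decide)] at t2
  rw [show Int.negOnePow 4 = 1 from Int.negOnePow_even 4 (by decide)] at t3
  rw [show Int.negOnePow 5 = -1 from Int.negOnePow_odd 5 (by decide)] at t4
  rw [show Int.negOnePow 7 = -1 from Int.negOnePow_odd 7 (by decide)] at t5
  rw [show Int.negOnePow 8 = 1 from Int.negOnePow_even 8 (by decide)] at t6
  simp only [mul_one, mul_neg_one, Units.val_neg] at t1 t2 t3 t4 t5 t6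
  have hs : ss n = ((aa n).negOnePow : ℤ) := rfl
  refine ⟨?_, ?_, ?_, ?_, ?_, ?_⟩ <;> omega

lemma gg_zero : gg 0 = 0 := by simp [gg, aa_zero]

lemma gg_succ_short (n : ℕ) (h : aa (n+1) = aa n + 1) : gg (n+1) = gg n + 5 := by
  have h0 := aa_nonneg n
  simp only [gg, h]
  omega

lemma gg_succ_long (n : ℕ) (h : aa (n+1) = aa n + 2) : gg (n+1) = gg n + 7 := by
  have h0 := aa_nonneg n
  simp only [gg, h]
  omega

lemma S_gg_eq : ∀ n, S (Real.sqrt 2) (gg n) = S (Real.sqrt 2) n := by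
  intro n
  induction n with
  | zero => rw [gg_zero]
  | succ n ih =>
    rcases gap n with ⟨h1, h2⟩ | ⟨h1, h2⟩
    · rw [gg_succ_short n h1]
      rw [(S_block n).2.2.2.2.1, ih, S_succ n, h1, Int.negOnePow_succ]
      simp only [Units.val_neg, ss]
      ring
    · rw [gg_succ_long n h1]
      have t7 := S_succ (gg n + 6)
      rw [show gg n + 6 + 1 = gg n + 7 from by omega] at t7
      rw [aa_gg7 n h2, negOnePow_shift,
        show Int.negOnePow 10 = 1 from Int.negOnePow_even 10 (by decide), mul_one] at t7
      rw [t7, (S_block n).2.2.2.2.2, ih, S_succ n, h1, Int.negOnePow_add,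
        show Int.negOnePow 2 = 1 from Int.negOnePow_even 2 (by decide), mul_one]

lemma cover : ∀ M N : ℕ, N ≤ gg M →
    ∃ n c : ℕ, c ≤ 6 ∧ N = gg n + c ∧ (n < M ∨ (n = M ∧ c = 0)) := by
  intro M
  induction M with
  | zero =>
    intro N hN
    rw [gg_zero] at hN
    exact ⟨0, 0, by omega, by rw [gg_zero]; omega, Or.inr ⟨rfl, by omega⟩⟩
  | succ M ih =>
    intro N hN
    by_cases h : N ≤ gg M
    · obtain ⟨n, c, hc, hN', hcase⟩ := ih N h
      exact ⟨n, c, hc, hN', Or.inl (by omega)⟩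
    · push_neg at h
      rcases gap M with ⟨h1, _⟩ | ⟨h1, _⟩
      · have h5 := gg_succ_short M h1
        exact ⟨M, N - gg M, by omega, by omega, Or.inl (by omega)⟩
      · have h7 := gg_succ_long M h1
        by_cases h7' : N = gg M + 7
        · exact ⟨M + 1, 0, by omega, by omega, Or.inr ⟨rfl, rfl⟩⟩
        · exact ⟨M, N - gg M, by omega, by omega, Or.inl (by omega)⟩

lemma ss_cases (n : ℕ) : ss n = 1 ∨ ss n = -1 := by
  unfold ss
  rcases Int.units_eq_one_or ((aa n).negOnePow) with h | h <;> rw [h] <;> simp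

lemma S_le (n c : ℕ) (hc : c ≤ 6) :
    S (Real.sqrt 2) (gg n + c) ≤ S (Real.sqrt 2) n + 1 := by
  obtain ⟨b1, b2, b3, b4, b5, b6⟩ := S_block n
  have hS := S_gg_eq n
  have hss := ss_cases n
  interval_cases c
  · simp only [Nat.add_zero]; omega
  all_goals omega

noncomputable def B : ℕ → ℕ
  | 0 => 0
  | (m+1) => gg (B m) + 3

lemma S_zero : S (Real.sqrt 2) 0 = 0 := by unfold S; simp

lemma main : ∀ m : ℕ, S (Real.sqrt 2) (B m) = m ∧ Even (aa (B m)) ∧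
    ∀ N : ℕ, N < B m → S (Real.sqrt 2) N < m := by
  intro m
  induction m with
  | zero =>
    refine ⟨by simp [B, S_zero], by rw [show B 0 = 0 from rfl, aa_zero]; exact ⟨0, by norm_num⟩, ?_⟩
    intro N hN; simp [B] at hN
  | succ m ih =>
    obtain ⟨hS, hE, hlt⟩ := ih
    have hss : ss (B m) = 1 := by
      unfold ss; rw [Int.negOnePow_even _ hE]; rfl
    obtain ⟨b1, b2, b3, b4, b5, b6⟩ := S_block (B m)
    have hgS : S (Real.sqrt 2) (gg (B m)) = m := by rw [S_gg_eq (B m), hS]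
    have hB1 : B (m+1) = gg (B m) + 3 := rfl
    refine ⟨?_, ?_, ?_⟩
    · rw [hB1, b3, hgS, hss]; push_cast; ring
    · rw [hB1]
      have h3 := aa_gg3 (B m)
      rw [Int.even_iff] at hE ⊢
      omega
    · intro N hN
      rw [hB1] at hN
      by_cases h : N ≤ gg (B m)
      · obtain ⟨n, c, hc, hN', hcase⟩ := cover (B m) N h
        rcases hcase with hn | ⟨hn, hc0⟩
        · have hb := S_le n c hc
          have hsn := hlt n hn
          rw [hN']
          push_cast
          omega
        · subst hn hc0
          rw [hN', Nat.add_zero, hgS]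
          push_cast; omega
      · have : N = gg (B m) + 1 ∨ N = gg (B m) + 2 := by omega
        rcases this with h' | h' <;> rw [h'] <;> [rw [b1]; rw [b2]] <;> rw [hgS] <;>
          push_cast <;> omega

lemma A_eq_B (m : ℕ) : A m = B m := by
  have h1 : S (Real.sqrt 2) (B m) = (m : ℤ) := (main m).1
  have hmem : B m ∈ {n : ℕ | S (Real.sqrt 2) n = (m : ℤ)} := h1
  refine le_antisymm (Nat.sInf_le hmem) ?_
  by_contra hlt
  push_neg at hlt
  have hm : S (Real.sqrt 2) (A m) = (m : ℤ) :=
    Nat.sInf_mem (⟨B m, hmem⟩ : {n : ℕ | S (Real.sqrt 2) n = (m : ℤ)}.Nonempty)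
  have := (main m).2.2 _ hlt
  omega

lemma B_cast (m : ℕ) : ((B (m+1) : ℕ) : ℤ) = 3 * (B m : ℤ) + 2 * aa (B m) + 3 := by
  show ((gg (B m) + 3 : ℕ) : ℤ) = _
  push_cast [gg_cast]
  ring

lemma D (m : ℕ) : 2 * aa (B (m+1)) = 3 * ((B (m+1) : ℕ) : ℤ) - ((B m : ℕ) : ℤ) - 1 := by
  have h1 : aa (B (m+1)) = 4 * (B m : ℤ) + 3 * aa (B m) + 4 := aa_gg3 (B m)
  rw [h1, B_cast]
  ring

theorem stmt_5 :
    A 0 = 0 ∧ A 1 = 3 ∧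
    (∀ n : ℕ, 1 ≤ n → (A (n + 1) : ℤ) = 6 * A n - A (n - 1) + 2) := by
  refine ⟨?_, ?_, ?_⟩
  · rw [A_eq_B]; rfl
  · rw [A_eq_B]; show gg 0 + 3 = 3; rw [gg_zero]
  · intro n hn
    obtain ⟨k, rfl⟩ : ∃ k, n = k + 1 := ⟨n - 1, by omega⟩
    simp only [A_eq_B, Nat.add_sub_cancel]
    have h1 := B_cast (k + 1)
    have h2 := D k
    omega
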